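/- The 4-sortedness function f(x₁,x₂,x₃,x₄) = 1{x₁ ≤ x₂ ≤ x₃ ≤ x₄ or x₁ ≥ x₂ ≥ x₃ ≥ x₄} on {0,1}⁴ cannot be written as a sum of monomials of degree at most 2 in the variables x₁,…,x₄, 1−x₁,…,1−x₄: there is no finite collection of products of at most 2 literals (each literal being some x_i or 1−x_i) whose sum equals f on all of {0,1}⁴. -/

import Mathlib

/-- A literal on `{0,1}⁴`: a coordinate `x i` or its negation `1 - x i`. -/
def Literal4 (g : (Fin 4 → ℤ) → ℤ) : Prop :=
  ∃ i : Fin 4, (g = fun x => x i) ∨ (g = fun x => 1 - x i)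

/-- A monomial of degree at most 2: a product of at most two literals. -/
def Mono2 (g : (Fin 4 → ℤ) → ℤ) : Prop :=
  (g = fun _ => 1) ∨ Literal4 g ∨
    ∃ a b, Literal4 a ∧ Literal4 b ∧ g = fun x => a x * b x

def q0 : Fin 4 → ℤ := ![0,0,0,0]
def q1 : Fin 4 → ℤ := ![0,1,0,0]
def q2 : Fin 4 → ℤ := ![0,0,1,0]
def q3 : Fin 4 → ℤ := ![1,0,0,1]

lemma lit_nonneg {g} (hg : Literal4 g) {x : Fin 4 → ℤ}
    (hx : ∀ i, x i = 0 ∨ x i = 1) : 0 ≤ g x := by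
  obtain ⟨i, h | h⟩ := hg <;> subst h <;> rcases hx i with h | h <;> simp [h]

lemma mono_nonneg {g} (hg : Mono2 g) {x : Fin 4 → ℤ}
    (hx : ∀ i, x i = 0 ∨ x i = 1) : 0 ≤ g x := by
  obtain h | h | ⟨a, b, ha, hb, h⟩ := hg
  · subst h; norm_num
  · exact lit_nonneg h hx
  · subst h; exact mul_nonneg (lit_nonneg ha hx) (lit_nonneg hb hx)

theorem stmt10 :
    ¬ ∃ (m : ℕ) (M : Fin m → ((Fin 4 → ℤ) → ℤ)),
        (∀ j, Mono2 (M j)) ∧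
        ∀ x : Fin 4 → ℤ, (∀ i, x i = 0 ∨ x i = 1) →
          (∑ j, M j x) =
            (if (x 0 ≤ x 1 ∧ x 1 ≤ x 2 ∧ x 2 ≤ x 3) ∨
                (x 3 ≤ x 2 ∧ x 2 ≤ x 1 ∧ x 1 ≤ x 0) then (1 : ℤ) else 0) := by
  rintro ⟨m, M, hM, hsum⟩
  have hc0 : ∀ i, q0 i = 0 ∨ q0 i = 1 := by decide
  have hc1 : ∀ i, q1 i = 0 ∨ q1 i = 1 := by decide
  have hc2 : ∀ i, q2 i = 0 ∨ q2 i = 1 := by decide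
  have hc3 : ∀ i, q3 i = 0 ∨ q3 i = 1 := by decide
  have h0 : (∑ j, M j q0) = 1 := by
    rw [hsum q0 hc0]; norm_num [q0]; decide
  have h1 : (∑ j, M j q1) = 0 := by
    rw [hsum q1 hc1]; norm_num [q1]; decide
  have h2 : (∑ j, M j q2) = 0 := by
    rw [hsum q2 hc2]; norm_num [q2]; decide
  have h3 : (∑ j, M j q3) = 0 := by
    rw [hsum q3 hc3]; norm_num [q3]; decide
  have hz1 : ∀ j, M j q1 = 0 := by
    intro j
    have := (Finset.sum_eq_zero_iff_of_nonneg
      (fun j _ => mono_nonneg (hM j) hc1)).mp h1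
    exact this j (Finset.mem_univ j)
  have hz2 : ∀ j, M j q2 = 0 := by
    intro j
    have := (Finset.sum_eq_zero_iff_of_nonneg
      (fun j _ => mono_nonneg (hM j) hc2)).mp h2
    exact this j (Finset.mem_univ j)
  have hz3 : ∀ j, M j q3 = 0 := by
    intro j
    have := (Finset.sum_eq_zero_iff_of_nonneg
      (fun j _ => mono_nonneg (hM j) hc3)).mp h3
    exact this j (Finset.mem_univ j)
  have hex : ∃ j, M j q0 ≠ 0 := by
    by_contra h
    push_neg at h
    rw [Finset.sum_eq_zero (fun j _ => h j)] at h0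
    exact one_ne_zero h0.symm
  obtain ⟨j, hne⟩ := hex
  have z1 := hz1 j
  have z2 := hz2 j
  have z3 := hz3 j
  obtain hc | ⟨i, hl | hl⟩ | ⟨a, b, ⟨i, hia | hia⟩, ⟨k, hkb | hkb⟩, hab⟩ := hM j
  · rw [hc] at z1; norm_num at z1
  · rw [hl] at hne; fin_cases i <;> simp [q0] at hne
  · rw [hl] at z1 z2 z3
    fin_cases i <;> simp [q1, q2, q3] at z1 z2 z3
  · rw [hab, hia] at hne; fin_cases i <;> simp [q0] at hne
  · rw [hab, hia] at hne; fin_cases i <;> simp [q0] at hne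
  · rw [hab, hkb] at hne; fin_cases k <;> simp [q0] at hne
  · rw [hab, hia, hkb] at z1 z2 z3
    fin_cases i <;> fin_cases k <;> simp [q1, q2, q3] at z1 z2 z3
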